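/- Let R be an integral domain of characteristic zero and let g ∈ R[x,y] \ {0} with deg_y g ≥ 1. Let D be the R-derivation on R[x,y] given by D = ∂/∂x + g·∂/∂y. Then the kernel R[x,y]^D equals R. -/
import Mathlib


open MvPolynomial

noncomputable section
open Polynomial

variable (R : Type*) [CommRing R]

def innerEquiv : MvPolynomial (Fin 1) R ≃ₐ[R] Polynomial R :=
  (MvPolynomial.finSuccEquiv R 0).trans
    (Polynomial.mapAlgEquiv (MvPolynomial.isEmptyAlgEquiv R (Fin 0)))

def e2 : MvPolynomial (Fin 2) R ≃ₐ[R] Polynomial (Polynomial R) :=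
  (MvPolynomial.renameEquiv R (Equiv.swap (0 : Fin 2) 1)).trans <|
    (MvPolynomial.finSuccEquiv R 1).trans (Polynomial.mapAlgEquiv (innerEquiv R))

lemma e2_apply (p : MvPolynomial (Fin 2) R) :
    e2 R p = Polynomial.map (innerEquiv R : MvPolynomial (Fin 1) R →+* Polynomial R)
      (MvPolynomial.finSuccEquiv R 1 (MvPolynomial.rename (Equiv.swap (0 : Fin 2) 1) p)) := rfl

lemma e2_X0 : e2 R (MvPolynomial.X 0) = Polynomial.C Polynomial.X := by
  rw [e2_apply, MvPolynomial.rename_X]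
  rw [show (Equiv.swap (0 : Fin 2) 1) 0 = Fin.succ 0 from rfl]
  rw [MvPolynomial.finSuccEquiv_X_succ, Polynomial.map_C]
  congr 1
  show Polynomial.map _ (MvPolynomial.finSuccEquiv R 0 (MvPolynomial.X 0)) = _
  rw [MvPolynomial.finSuccEquiv_X_zero, Polynomial.map_X]

lemma e2_X1 : e2 R (MvPolynomial.X 1) = Polynomial.X := by
  rw [e2_apply, MvPolynomial.rename_X]
  rw [show (Equiv.swap (0 : Fin 2) 1) 1 = 0 from rfl]
  rw [MvPolynomial.finSuccEquiv_X_zero, Polynomial.map_X]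

lemma natDegree_e2 (p : MvPolynomial (Fin 2) R) :
    (e2 R p).natDegree = p.degreeOf 1 := by
  rw [e2_apply, Polynomial.natDegree_map_eq_of_injective
    (RingHom.injective_iff_ker_eq_bot _ |>.mpr ?_), MvPolynomial.natDegree_finSuccEquiv]
  · have := MvPolynomial.degreeOf_rename_of_injective
      (Equiv.injective (Equiv.swap (0 : Fin 2) 1)) (p := p) 1
    rwa [Equiv.swap_apply_right] at this
  · exact RingHom.ker_coe_equiv (innerEquiv R).toRingEquiv

def dXcw : Derivation R (Polynomial (Polynomial R)) (Polynomial (Polynomial R)) :=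
  PolynomialModule.equivPolynomialSelf.compDer
    (Polynomial.derivative' (R := R)).mapCoeffs

lemma coeff_dXcw (p : Polynomial (Polynomial R)) (i : ℕ) :
    (dXcw R p).coeff i = derivative (p.coeff i) := rfl

lemma dXcw_C (p : Polynomial R) : dXcw R (Polynomial.C p) = Polynomial.C (derivative p) := by
  ext i
  rw [coeff_dXcw, Polynomial.coeff_C, Polynomial.coeff_C]
  split <;> simp

lemma dXcw_X : dXcw R (Polynomial.X : Polynomial (Polynomial R)) = 0 := by
  ext i
  rw [coeff_dXcw, Polynomial.coeff_X]
  split <;> simp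

def dY : Derivation R (Polynomial (Polynomial R)) (Polynomial (Polynomial R)) :=
  (Polynomial.derivative' (R := Polynomial R)).restrictScalars R

lemma dY_apply (p : Polynomial (Polynomial R)) : dY R p = derivative p := rfl

def Derivation.pullback {R A B : Type*} [CommRing R] [CommRing A] [CommRing B]
    [Algebra R A] [Algebra R B] (e : A ≃ₐ[R] B) (D : Derivation R B B) :
    Derivation R A A where
  toLinearMap := e.symm.toLinearMap ∘ₗ D.toLinearMap ∘ₗ e.toLinearMap
  map_one_eq_zero' := by simp
  leibniz' a b := by
    simp only [LinearMap.comp_apply, AlgEquiv.toLinearMap_apply, Derivation.coeFn_coe,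
      map_mul, Derivation.leibniz, smul_eq_mul, map_add, AlgEquiv.symm_apply_apply]

lemma Derivation.pullback_apply {R A B : Type*} [CommRing R] [CommRing A] [CommRing B]
    [Algebra R A] [Algebra R B] (e : A ≃ₐ[R] B) (D : Derivation R B B) (a : A) :
    Derivation.pullback e D a = e.symm (D (e a)) := rfl

lemma D_eq_pullback (g : MvPolynomial (Fin 2) R) :
    (MvPolynomial.pderiv 0 + g • MvPolynomial.pderiv 1 :
      Derivation R (MvPolynomial (Fin 2) R) (MvPolynomial (Fin 2) R)) =
    Derivation.pullback (e2 R) (dXcw R + e2 R g • dY R) := by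
  apply MvPolynomial.derivation_ext
  intro i
  fin_cases i
  · show (MvPolynomial.pderiv 0 + g • MvPolynomial.pderiv 1 :
        Derivation R (MvPolynomial (Fin 2) R) (MvPolynomial (Fin 2) R)) (MvPolynomial.X 0) =
      Derivation.pullback (e2 R) (dXcw R + e2 R g • dY R) (MvPolynomial.X 0)
    simp only [Derivation.pullback_apply, e2_X0, Derivation.add_apply, Derivation.smul_apply,
      dXcw_C, dY_apply, derivative_C, derivative_X, smul_zero, add_zero, map_one,
      MvPolynomial.pderiv_X_self, MvPolynomial.pderiv_X_of_ne (show (0:Fin 2) ≠ 1 by decide)]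
  · show (MvPolynomial.pderiv 0 + g • MvPolynomial.pderiv 1 :
        Derivation R (MvPolynomial (Fin 2) R) (MvPolynomial (Fin 2) R)) (MvPolynomial.X 1) =
      Derivation.pullback (e2 R) (dXcw R + e2 R g • dY R) (MvPolynomial.X 1)
    simp only [Derivation.pullback_apply, e2_X1, Derivation.add_apply, Derivation.smul_apply,
      dXcw_X, dY_apply, derivative_X, smul_eq_mul, mul_one, zero_add,
      AlgEquiv.symm_apply_apply, MvPolynomial.pderiv_X_self,
      MvPolynomial.pderiv_X_of_ne (show (1:Fin 2) ≠ 0 by decide), smul_zero, map_one]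

lemma key (g f : MvPolynomial (Fin 2) R)
    (D : Derivation R (MvPolynomial (Fin 2) R) (MvPolynomial (Fin 2) R))
    (hD : D = MvPolynomial.pderiv 0 + g • MvPolynomial.pderiv 1) :
    e2 R (D f) = dXcw R (e2 R f) + e2 R g * derivative (e2 R f) := by
  rw [hD, D_eq_pullback, Derivation.pullback_apply, AlgEquiv.apply_symm_apply,
    Derivation.add_apply, Derivation.smul_apply, dY_apply, smul_eq_mul]



theorem kernel_aux
    (R : Type*) [CommRing R] [IsDomain R] [CharZero R]
    (g : MvPolynomial (Fin 2) R) (hdeg : 1 ≤ g.degreeOf 1)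
    (D : Derivation R (MvPolynomial (Fin 2) R) (MvPolynomial (Fin 2) R))
    (hD : D = MvPolynomial.pderiv 0 + g • MvPolynomial.pderiv 1) :
    ∀ f : MvPolynomial (Fin 2) R, D f = 0 ↔ ∃ r : R, f = MvPolynomial.C r := by
  intro f
  constructor
  · intro hf
    have hkey := key R g f D hD
    rw [hf, map_zero] at hkey
    replace hkey := hkey.symm
    set F := e2 R f with hFdef
    set G := e2 R g with hGdef
    have hGdeg : 1 ≤ G.natDegree := by rw [hGdef, natDegree_e2]; exact hdeg
    have hGne : G ≠ 0 := by
      intro h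
      rw [h, natDegree_zero] at hGdeg
      omega
    have hn : F.natDegree = 0 := by
      by_contra hn
      set n := F.natDegree with hndef
      have hFne : F ≠ 0 := fun h => hn (by rw [hndef, h, natDegree_zero])
      have ha : F.coeff n ≠ 0 := leadingCoeff_ne_zero.mpr hFne
      have hb : F.coeff n * (n : Polynomial R) ≠ 0 :=
        mul_ne_zero ha (Nat.cast_ne_zero.mpr hn)
      have hcast : ((n - 1 : ℕ) : Polynomial R) + 1 = (n : Polynomial R) := by
        have h1 : (n - 1) + 1 = n := Nat.succ_pred_eq_of_pos (Nat.pos_of_ne_zero hn)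
        exact_mod_cast congrArg (Nat.cast : ℕ → Polynomial R) h1
      have hcoefd : (derivative F).coeff (n - 1) = F.coeff n * (n : Polynomial R) := by
        have h1 : (n - 1) + 1 = n := Nat.succ_pred_eq_of_pos (Nat.pos_of_ne_zero hn)
        rw [coeff_derivative, h1, hcast]
      have hderFne : derivative F ≠ 0 := fun h =>
        hb (by rw [← hcoefd, h, Polynomial.coeff_zero])
      have hdF : (derivative F).natDegree = n - 1 :=
        le_antisymm (natDegree_derivative_le F) (le_natDegree_of_ne_zero (hcoefd ▸ hb))
      have heq : dXcw R F = -(G * derivative F) := eq_neg_of_add_eq_zero_left hkey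
      have hdXle : (dXcw R F).natDegree ≤ n := by
        rw [natDegree_le_iff_coeff_eq_zero]
        intro m hm
        rw [coeff_dXcw, coeff_eq_zero_of_natDegree_lt hm, derivative_zero]
      have hGdeg1 : G.natDegree = 1 := by
        have h1 : G.natDegree + (n - 1) ≤ n := by
          calc G.natDegree + (n - 1) = (G * derivative F).natDegree := by
                rw [natDegree_mul hGne hderFne, hdF]
            _ = (dXcw R F).natDegree := by rw [heq, natDegree_neg]
            _ ≤ n := hdXle
        omega
      have h6 : (derivative F).leadingCoeff = F.coeff n * (n : Polynomial R) := by
        have : (derivative F).leadingCoeff = (derivative F).coeff (n - 1) := by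
          rw [← hdF]; rfl
        rw [this, hcoefd]
      have hmul : (G * derivative F).coeff n =
          G.leadingCoeff * (F.coeff n * (n : Polynomial R)) := by
        have h5 := coeff_mul_degree_add_degree G (derivative F)
        rw [hdF, hGdeg1, show 1 + (n - 1) = n by omega, h6] at h5
        exact h5
      have hda : derivative (F.coeff n) =
          -(G.leadingCoeff * (F.coeff n * (n : Polynomial R))) := by
        have h2 := congrArg (fun p => p.coeff n) heq
        simpa [coeff_dXcw, hmul] using h2
      have hrhs : G.leadingCoeff * (F.coeff n * (n : Polynomial R)) ≠ 0 :=
        mul_ne_zero (leadingCoeff_ne_zero.mpr hGne) hb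
      have hdane : derivative (F.coeff n) ≠ 0 := by
        rw [hda]; exact neg_ne_zero.mpr hrhs
      have hadne : (F.coeff n).natDegree ≠ 0 := fun h =>
        hdane (derivative_of_natDegree_zero h)
      have hlt := natDegree_derivative_lt hadne
      have hdeq : (derivative (F.coeff n)).natDegree =
          G.leadingCoeff.natDegree + (F.coeff n).natDegree := by
        rw [hda, natDegree_neg, natDegree_mul (leadingCoeff_ne_zero.mpr hGne) hb,
          natDegree_mul ha (Nat.cast_ne_zero.mpr hn), natDegree_natCast, add_zero]
      omega
    have hFC : F = Polynomial.C (F.coeff 0) := eq_C_of_natDegree_eq_zero hn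
    have h2 : derivative F = 0 := by rw [hFC]; exact derivative_C
    have h3 : dXcw R F = 0 := by rwa [h2, mul_zero, add_zero] at hkey
    have hder0 : derivative (F.coeff 0) = 0 := by
      have h4 := congrArg (fun p => p.coeff 0) h3
      simpa [coeff_dXcw] using h4
    have e2C : ∀ r : R, e2 R (MvPolynomial.C r) = Polynomial.C (Polynomial.C r) := fun r => by
      rw [show (MvPolynomial.C r : MvPolynomial (Fin 2) R) = algebraMap R _ r from rfl,
        AlgEquiv.commutes]
      rfl
    obtain ⟨r, hr⟩ : ∃ r : R, F.coeff 0 = Polynomial.C r :=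
      ⟨(F.coeff 0).coeff 0, eq_C_of_derivative_eq_zero hder0⟩
    refine ⟨r, (e2 R).injective ?_⟩
    rw [e2C, ← hFdef, hFC, hr]
  · rintro ⟨r, rfl⟩
    rw [hD, show (MvPolynomial.C r : MvPolynomial (Fin 2) R) = algebraMap R _ r from rfl]
    exact Derivation.map_algebraMap _ r

end

/-- **Lemma 3.5.** Let `R` be an integral domain of characteristic zero and
`g ∈ R[x,y] \ {0}` with `deg_y g ≥ 1`.  For the derivation `D = ∂x + g ∂y` on `R[x,y]` one
has `R[x,y]^D = R`. -/
theorem kernel_of_dx_add_g_dy_eq_base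
    (R : Type*) [CommRing R] [IsDomain R] [CharZero R]
    (g : MvPolynomial (Fin 2) R) (hg : g ≠ 0) (hdeg : 1 ≤ g.degreeOf 1)
    (D : Derivation R (MvPolynomial (Fin 2) R) (MvPolynomial (Fin 2) R))
    (hD : D = pderiv 0 + g • pderiv 1) :
    ∀ f : MvPolynomial (Fin 2) R, D f = 0 ↔ ∃ r : R, f = C r :=
  kernel_aux R g hdeg D hD
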